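/- There exist 2^{ℵ₀} (continuum many) distinct sequences (a_n)_{n∈ℕ} of positive integers that arise as associative spectra of binary groupoids, where the associative spectrum of a groupoid A is the sequence whose n-th entry is the number of distinct term functions induced by bracketings with n operation occurrences. -/

import Mathlib

/-- p-ary bracketings: terms over one variable `x` with one p-ary operation symbol `ω`. -/
inductive Brack (p : ℕ) : Type
  | x : Brack p
  | node : (Fin p → Brack p) → Brack p

namespace Brack

/-- occurrence number: number of occurrences of ω -/
def occ {p : ℕ} : Brack p → ℕ
  | .x => 0
  | .node f => 1 + ∑ i, occ (f i)

/-- length: number of occurrences of x -/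
def len {p : ℕ} : Brack p → ℕ
  | .x => 1
  | .node f => ∑ i, len (f i)

/-- evaluation of a bracketing in a groupoid, variables enumerated left-to-right
starting at position `j`. -/
def evalFrom {p : ℕ} {A : Type*} (op : (Fin p → A) → A) (v : ℕ → A) :
    Brack p → ℕ → A
  | .x, j => v j
  | .node f, j =>
      op (fun i => evalFrom op v (f i)
        (j + ∑ k ∈ Finset.univ.filter (· < i), len (f k)))

/-- the term function induced by a bracketing -/
def eval {p : ℕ} {A : Type*} (op : (Fin p → A) → A) (t : Brack p) (v : ℕ → A) : A :=
  evalFrom op v t 0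

/-- prefix word of a bracketing: `true` codes ω, `false` codes x -/
def word {p : ℕ} : Brack p → List Bool
  | .x => [false]
  | .node f => true :: (List.ofFn (fun i => word (f i))).flatten

/-- auxiliary: scan a word, recording 1 + number of x's before each ω -/
def STaux : List Bool → ℕ → List ℕ
  | [], _ => []
  | true :: w, c => (c + 1) :: STaux w c
  | false :: w, c => STaux w (c + 1)

/-- insertion tuple of a bracketing: the i-th entry is one plus the number
of x's preceding the i-th occurrence of ω in the prefix notation -/
def ST {p : ℕ} (t : Brack p) : List ℕ := STaux (word t) 0

/-- replace the i-th (0-based) occurrence of x in `t` by `s` -/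
def replaceLeaf {p : ℕ} : Brack p → ℕ → Brack p → Brack p
  | .x, i, s => if i = 0 then s else .x
  | .node f, i, s => .node (fun j =>
      let off := ∑ k ∈ Finset.univ.filter (· < j), len (f k)
      if off ≤ i ∧ i < off + len (f j) then replaceLeaf (f j) (i - off) s else f j)

/-- β_i : insertion of ω x … x at the i-th (1-based) occurrence of x -/
def beta {p : ℕ} (i : ℕ) (t : Brack p) : Brack p :=
  replaceLeaf t (i - 1) (.node (fun _ => .x))

/-- left depth: depth of leftmost leaf (binary case) -/
def dl : Brack 2 → ℕ
  | .x => 0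
  | .node f => dl (f 0) + 1

/-- right depth: depth of rightmost leaf (binary case) -/
def dr : Brack 2 → ℕ
  | .x => 0
  | .node f => dr (f 1) + 1

/-- left factor of a binary bracketing -/
def leftF : Brack 2 → Brack 2
  | .x => .x
  | .node f => f 0

/-- whether a bracketing is the single variable x -/
def isX {p : ℕ} : Brack p → Bool
  | .x => true
  | .node _ => false

/-- number of pairs of eggs, i.e. subterm occurrences of ω x x (binary case) -/
def eggs : Brack 2 → ℕ
  | .x => 0
  | .node f => (if isX (f 0) && isX (f 1) then 1 else 0) + eggs (f 0) + eggs (f 1)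

end Brack

/-- generalized Catalan numbers -/
def genCat (p : ℕ) : ℕ → ℕ
  | 0 => 1
  | n + 1 =>
      ∑ v ∈ (Finset.Nat.antidiagonalTuple p n).attach, ∏ k : Fin p, genCat p (v.1 k)
  decreasing_by
    have hv := Finset.Nat.mem_antidiagonalTuple.mp v.2
    have hle : v.1 k ≤ n := by
      calc v.1 k ≤ ∑ i, v.1 i :=
            Finset.single_le_sum (fun i _ => Nat.zero_le _) (Finset.mem_univ k)
        _ = n := hv
    omega

/-- the set M(n,k,p) of weakly increasing n-tuples of positive integers
with u_i ≤ (p-1)(i-1)+k (here indices are 0-based) -/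
def Mset (n k p : ℕ) : Set (Fin n → ℕ) :=
  {u | (∀ i : Fin n, 1 ≤ u i ∧ u i ≤ (p - 1) * (i : ℕ) + k) ∧
    ∀ i j : Fin n, i ≤ j → u i ≤ u j}

/-- the setoid of equality of induced term functions on bracketings with n occurrences -/
def tfSetoid {A : Type} (op : (Fin 2 → A) → A) (n : ℕ) :
    Setoid {t : Brack 2 // Brack.occ t = n} :=
  ⟨fun s t => ∀ v : ℕ → A, Brack.eval op s.1 v = Brack.eval op t.1 v,
    ⟨fun _ _ => rfl, fun h v => (h v).symm, fun h1 h2 v => (h1 v).trans (h2 v)⟩⟩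

section Aux

open Brack

@[simp] lemma occ_x {p : ℕ} : occ (.x : Brack p) = 0 := rfl

lemma occ_node (f : Fin 2 → Brack 2) : occ (.node f) = 1 + (occ (f 0) + occ (f 1)) := by
  simp [occ, Fin.sum_univ_two]

lemma len_node (f : Fin 2 → Brack 2) : len (.node f) = len (f 0) + len (f 1) := by
  simp [len, Fin.sum_univ_two]

lemma dl_node (f : Fin 2 → Brack 2) : dl (.node f) = dl (f 0) + 1 := rfl
lemma dr_node (f : Fin 2 → Brack 2) : dr (.node f) = dr (f 1) + 1 := rfl

lemma len_eq_occ (t : Brack 2) : len t = occ t + 1 := by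
  induction t with
  | x => rfl
  | node f ih =>
      rw [len_node, occ_node, ih 0, ih 1]; ring

lemma len_pos (t : Brack 2) : 1 ≤ len t := by rw [len_eq_occ]; omega

lemma occ_eq_zero {t : Brack 2} (h : occ t = 0) : t = .x := by
  cases t with
  | x => rfl
  | node f => rw [occ_node] at h; omega

lemma eta2 {α : Type*} (f : Fin 2 → α) : ![f 0, f 1] = f := by
  funext i
  fin_cases i <;> simp

/-- the pattern building blocks -/
def egg : Brack 2 := .node ![.x, .x]

def chain : ℕ → Brack 2
  | 0 => .node ![egg, .x]
  | j + 1 => .node ![.x, chain j]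

def Pat (k : ℕ) : Brack 2 := .node ![egg, chain k]

def Rc : ℕ → Brack 2
  | 0 => .x
  | n + 1 => .node ![.x, Rc n]

def um (m : ℕ) : Brack 2 := .node ![egg, .node ![egg, Rc (m + 1)]]

@[simp] lemma occ_egg : occ egg = 1 := by simp [egg, occ_node]
@[simp] lemma dl_egg : dl egg = 1 := by simp [egg, dl_node]; rfl
@[simp] lemma dr_egg : dr egg = 1 := by simp [egg, dr_node]; rfl

@[simp] lemma occ_chain (j : ℕ) : occ (chain j) = j + 2 := by
  induction j with
  | zero => simp [chain, occ_node]
  | succ j ih => simp [chain, occ_node, ih]; omega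

@[simp] lemma dr_chain (j : ℕ) : dr (chain j) = j + 1 := by
  induction j with
  | zero => simp [chain, dr_node]; rfl
  | succ j ih => simp [chain, dr_node, ih]

@[simp] lemma occ_Pat (k : ℕ) : occ (Pat k) = k + 4 := by
  simp [Pat, occ_node]; omega

@[simp] lemma dl_Pat (k : ℕ) : dl (Pat k) = 2 := by simp [Pat, dl_node]
@[simp] lemma dr_Pat (k : ℕ) : dr (Pat k) = k + 2 := by simp [Pat, dr_node]

@[simp] lemma occ_Rc (n : ℕ) : occ (Rc n) = n := by
  induction n with
  | zero => rfl
  | succ n ih => simp [Rc, occ_node, ih]; omega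

@[simp] lemma dr_Rc (n : ℕ) : dr (Rc n) = n := by
  induction n with
  | zero => rfl
  | succ n ih => simp [Rc, dr_node, ih]

@[simp] lemma occ_um (m : ℕ) : occ (um m) = m + 5 := by simp [um, occ_node]; omega
@[simp] lemma dl_um (m : ℕ) : dl (um m) = 2 := by simp [um, dl_node]
@[simp] lemma dr_um (m : ℕ) : dr (um m) = m + 3 := by simp [um, dr_node]

end Aux
section Patterns

open Brack

/-- `Inst s t`: t is a substitution instance of s (leaves replaced by terms) -/
inductive Inst : Brack 2 → Brack 2 → Prop
  | x (t : Brack 2) : Inst .x t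
  | node {f g : Fin 2 → Brack 2} :
      Inst (f 0) (g 0) → Inst (f 1) (g 1) → Inst (.node f) (.node g)

/-- `POcc p t`: the pattern p occurs in t (instance of p is a subterm of t) -/
inductive POcc (p : Brack 2) : Brack 2 → Prop
  | here {t : Brack 2} : Inst p t → POcc p t
  | sub {f : Fin 2 → Brack 2} (i : Fin 2) : POcc p (f i) → POcc p (.node f)

lemma Inst.refl (t : Brack 2) : Inst t t := by
  induction t with
  | x => exact Inst.x _
  | node f ih => exact Inst.node (ih 0) (ih 1)

lemma Inst.occ_le {s t : Brack 2} (h : Inst s t) : occ s ≤ occ t := by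
  induction h with
  | x => exact Nat.zero_le _
  | node h0 h1 ih0 ih1 => rw [occ_node, occ_node]; omega

lemma Inst.trans' {s t u : Brack 2} (h1 : Inst s t) (h2 : Inst t u) : Inst s u := by
  induction h1 generalizing u with
  | x => exact Inst.x _
  | node h0 h1' ih0 ih1 =>
      cases h2 with
      | node g0 g1 => exact Inst.node (ih0 g0) (ih1 g1)

lemma Inst.eq_of_occ {s t : Brack 2} (h : Inst s t) (he : occ s = occ t) : s = t := by
  induction h with
  | x t => exact (occ_eq_zero he.symm).symm
  | @node f g h0 h1 ih0 ih1 =>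
      rw [occ_node, occ_node] at he
      have l0 := h0.occ_le
      have l1 := h1.occ_le
      have e0 : f 0 = g 0 := ih0 (by omega)
      have e1 : f 1 = g 1 := ih1 (by omega)
      have : f = g := by
        funext i; fin_cases i <;> assumption
      rw [this]

lemma fin2 (i : Fin 2) : i = 0 ∨ i = 1 := by revert i; decide

lemma POcc.occ_le {p t : Brack 2} (h : POcc p t) : occ p ≤ occ t := by
  induction h with
  | here hi => exact hi.occ_le
  | @sub f i h ih =>
      rw [occ_node]
      rcases fin2 i with rfl | rfl <;> omega

lemma POcc.eq_of_occ {p t : Brack 2} (h : POcc p t) (he : occ p = occ t) : p = t := by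
  cases h with
  | here hi => exact hi.eq_of_occ he
  | @sub f i h =>
      exfalso
      have := h.occ_le
      rw [occ_node] at he
      rcases fin2 i with rfl | rfl <;> omega

lemma POcc.of_inst {p s w : Brack 2} (h : POcc p s) (hw : Inst s w) : POcc p w := by
  induction h generalizing w with
  | here hi => exact POcc.here (hi.trans' hw)
  | @sub f i h ih =>
      cases hw with
      | @node _ g h0 h1 =>
          rcases fin2 i with rfl | rfl
          · exact POcc.sub 0 (ih h0)
          · exact POcc.sub 1 (ih h1)

/-- antichain: no pattern occurs in a chain -/
lemma not_inst_pat_chain (a j : ℕ) : ¬ Inst (Pat a) (chain j) := by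
  intro h
  cases j with
  | zero =>
      rw [Pat, chain] at h
      cases h with
      | node h0 h1 =>
          simp only [Matrix.cons_val_zero, Matrix.cons_val_one, Matrix.head_cons] at h0 h1
          cases a with
          | zero => rw [chain] at h1; cases h1
          | succ a => rw [chain] at h1; cases h1
  | succ j =>
      rw [Pat, chain] at h
      cases h with
      | node h0 h1 =>
          simp only [Matrix.cons_val_zero] at h0
          rw [egg] at h0; cases h0

lemma not_pocc_pat_chain (a j : ℕ) : ¬ POcc (Pat a) (chain j) := by
  induction j with
  | zero =>
      intro h
      cases h with
      | here hi => exact not_inst_pat_chain a 0 hi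
      | @sub f i h =>
          have := h.occ_le
          have h4 : occ (Pat a) = a + 4 := occ_Pat a
          rcases fin2 i with rfl | rfl <;>
            simp only [chain, Matrix.cons_val_zero, Matrix.cons_val_one,
              Matrix.head_cons] at this <;> simp [h4] at this
  | succ j ih =>
      intro h
      cases h with
      | here hi => exact not_inst_pat_chain a (j+1) hi
      | @sub f i h =>
          have h4 : occ (Pat a) = a + 4 := occ_Pat a
          rcases fin2 i with rfl | rfl
          · have := h.occ_le
            simp only [chain, Matrix.cons_val_zero] at this
            simp [h4] at this
          · simp only [chain, Matrix.cons_val_one, Matrix.head_cons] at h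
            exact ih h

lemma not_inst_chain_chain {a b : ℕ} (h : a ≠ b) : ¬ Inst (chain a) (chain b) := by
  induction a generalizing b with
  | zero =>
      intro hi
      cases b with
      | zero => exact h rfl
      | succ b =>
          rw [chain, chain] at hi
          cases hi with
          | node h0 h1 =>
              simp only [Matrix.cons_val_zero] at h0
              rw [egg] at h0; cases h0
  | succ a ih =>
      intro hi
      cases b with
      | zero =>
          rw [chain, chain] at hi
          cases hi with
          | node h0 h1 =>
              simp only [Matrix.cons_val_one, Matrix.head_cons] at h1
              cases a <;> rw [chain] at h1 <;> cases h1
      | succ b =>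
          rw [chain, chain] at hi
          cases hi with
          | node h0 h1 =>
              simp only [Matrix.cons_val_one, Matrix.head_cons] at h1
              exact ih (by omega) h1

lemma pat_antichain {a b : ℕ} (hab : a < b) : ¬ POcc (Pat a) (Pat b) := by
  intro h
  cases h with
  | here hi =>
      rw [Pat, Pat] at hi
      cases hi with
      | node h0 h1 =>
          simp only [Matrix.cons_val_one, Matrix.head_cons] at h1
          exact not_inst_chain_chain (by omega) h1
  | @sub f i h =>
      rcases fin2 i with rfl | rfl
      · have := h.occ_le
        simp only [Pat, Matrix.cons_val_zero] at this
        simp [occ_node] at this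
      · simp only [Pat, Matrix.cons_val_one, Matrix.head_cons] at h
        exact not_pocc_pat_chain a b h

lemma pocc_pat_refl (k : ℕ) : POcc (Pat k) (Pat k) := POcc.here (Inst.refl _)

lemma pocc_pat0_um (m : ℕ) : POcc (Pat 0) (um m) := by
  apply POcc.here
  rw [Pat, um, chain]
  refine Inst.node ?_ ?_ <;>
    simp only [Matrix.cons_val_zero, Matrix.cons_val_one, Matrix.head_cons]
  · exact Inst.refl _
  · refine Inst.node ?_ ?_ <;>
      simp only [Matrix.cons_val_zero, Matrix.cons_val_one, Matrix.head_cons]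
    · exact Inst.refl _
    · exact Inst.x _

end Patterns
section Groupoid

open Brack
open scoped Classical

def Avd (S : Set ℕ) (a : ℕ) : Prop := a = 0 ∨ ∃ k, a = k + 1 ∧ k ∉ S

def Good (S : Set ℕ) (t : Brack 2) : Prop := ∀ a, Avd S a → ¬ POcc (Pat a) t

lemma good_x (S : Set ℕ) : Good S .x := by
  intro a _ h
  have := h.occ_le
  simp [occ] at this

lemma Good.child {S : Set ℕ} {f : Fin 2 → Brack 2} (h : Good S (.node f)) (i : Fin 2) :
    Good S (f i) := fun a ha hp => h a ha (hp.sub i)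

lemma not_good_iff {S : Set ℕ} {t : Brack 2} :
    ¬ Good S t ↔ ∃ a, Avd S a ∧ POcc (Pat a) t := by
  unfold Good; push_neg; rfl

abbrev A2 : Type := Brack 2 ⊕ ℕ × ℕ × ℕ

lemma fun2_ext {α : Type*} {g g' : Fin 2 → α} (h0 : g 0 = g' 0) (h1 : g 1 = g' 1) : g = g' := by
  funext i; rcases fin2 i with rfl | rfl <;> assumption

def pl : A2 → ℕ := fun a => match a with | .inl t => len t | .inr z => z.1
def pd : A2 → ℕ := fun a => match a with | .inl t => dl t | .inr z => z.2.1
def pe : A2 → ℕ := fun a => match a with | .inl t => dr t | .inr z => z.2.2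

@[simp] lemma pl_inl (t : Brack 2) : pl (.inl t) = len t := rfl
@[simp] lemma pl_inr (z : ℕ × ℕ × ℕ) : pl (.inr z) = z.1 := rfl
@[simp] lemma pd_inl (t : Brack 2) : pd (.inl t) = dl t := rfl
@[simp] lemma pd_inr (z : ℕ × ℕ × ℕ) : pd (.inr z) = z.2.1 := rfl
@[simp] lemma pe_inl (t : Brack 2) : pe (.inl t) = dr t := rfl
@[simp] lemma pe_inr (z : ℕ × ℕ × ℕ) : pe (.inr z) = z.2.2 := rfl

def bopCond (S : Set ℕ) (g : Fin 2 → A2) : Prop :=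
  ∃ st : Brack 2 × Brack 2, g 0 = .inl st.1 ∧ g 1 = .inl st.2 ∧ Good S (.node ![st.1, st.2])

open Classical in
noncomputable def bop (S : Set ℕ) (g : Fin 2 → A2) : A2 :=
  if h : bopCond S g then
    .inl (.node ![h.choose.1, h.choose.2])
  else
    .inr (pl (g 0) + pl (g 1), pd (g 0) + 1, pe (g 1) + 1)

lemma bopCond_iff {S : Set ℕ} {g : Fin 2 → A2} :
    bopCond S g ↔ ∃ s t : Brack 2, g 0 = .inl s ∧ g 1 = .inl t ∧ Good S (.node ![s, t]) := by
  constructor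
  · rintro ⟨⟨s, t⟩, h⟩; exact ⟨s, t, h⟩
  · rintro ⟨s, t, h⟩; exact ⟨⟨s, t⟩, h⟩

lemma bop_inl {S : Set ℕ} {g : Fin 2 → A2} {s t : Brack 2} (h0 : g 0 = .inl s)
    (h1 : g 1 = .inl t) (hg : Good S (.node ![s, t])) :
    bop S g = .inl (.node ![s, t]) := by
  have hex : bopCond S g := ⟨⟨s, t⟩, h0, h1, hg⟩
  rw [bop, dif_pos hex]
  obtain ⟨e0, e1, -⟩ := hex.choose_spec
  have hp : hex.choose = (s, t) :=
    Prod.ext (Sum.inl.inj (e0.symm.trans h0)) (Sum.inl.inj (e1.symm.trans h1))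
  rw [hp]

lemma bop_inr {S : Set ℕ} {g : Fin 2 → A2}
    (h : ¬ ∃ s t : Brack 2, g 0 = .inl s ∧ g 1 = .inl t ∧ Good S (.node ![s, t])) :
    bop S g = .inr (pl (g 0) + pl (g 1), pd (g 0) + 1, pe (g 1) + 1) := by
  rw [bop, dif_neg (fun hc => h (bopCond_iff.mp hc))]

lemma bop_ext {S : Set ℕ} {g g' : Fin 2 → A2} (h0 : g 0 = g' 0) (h1 : g 1 = g' 1) :
    bop S g = bop S g' := by
  rw [fun2_ext h0 h1]

lemma pl_bop (S : Set ℕ) (g : Fin 2 → A2) : pl (bop S g) = pl (g 0) + pl (g 1) := by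
  by_cases h : ∃ s t : Brack 2, g 0 = .inl s ∧ g 1 = .inl t ∧ Good S (.node ![s, t])
  · obtain ⟨s, t, h0, h1, hg⟩ := h
    rw [bop_inl h0 h1 hg, h0, h1]
    simp [len_node]
  · rw [bop_inr h]; rfl

lemma pd_bop (S : Set ℕ) (g : Fin 2 → A2) : pd (bop S g) = pd (g 0) + 1 := by
  by_cases h : ∃ s t : Brack 2, g 0 = .inl s ∧ g 1 = .inl t ∧ Good S (.node ![s, t])
  · obtain ⟨s, t, h0, h1, hg⟩ := h
    rw [bop_inl h0 h1 hg, h0]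
    simp [dl_node]
  · rw [bop_inr h]; rfl

lemma pe_bop (S : Set ℕ) (g : Fin 2 → A2) : pe (bop S g) = pe (g 1) + 1 := by
  by_cases h : ∃ s t : Brack 2, g 0 = .inl s ∧ g 1 = .inl t ∧ Good S (.node ![s, t])
  · obtain ⟨s, t, h0, h1, hg⟩ := h
    rw [bop_inl h0 h1 hg, h1]
    simp [dr_node]
  · rw [bop_inr h]; rfl

lemma off0 (f : Fin 2 → Brack 2) :
    (∑ k ∈ Finset.univ.filter (· < (0 : Fin 2)), len (f k)) = 0 := by
  have h : (Finset.univ.filter (· < (0 : Fin 2))) = (∅ : Finset (Fin 2)) := by decide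
  rw [h, Finset.sum_empty]

lemma off1 (f : Fin 2 → Brack 2) :
    (∑ k ∈ Finset.univ.filter (· < (1 : Fin 2)), len (f k)) = len (f 0) := by
  have h : (Finset.univ.filter (· < (1 : Fin 2))) = ({0} : Finset (Fin 2)) := by decide
  rw [h, Finset.sum_singleton]

lemma evalFrom_x (S : Set ℕ) (v : ℕ → A2) (j : ℕ) : evalFrom (bop S) v .x j = v j := rfl

lemma evalFrom_node (S : Set ℕ) (v : ℕ → A2) (f : Fin 2 → Brack 2) (j : ℕ) :
    evalFrom (bop S) v (.node f) j =
      bop S ![evalFrom (bop S) v (f 0) j, evalFrom (bop S) v (f 1) (j + len (f 0))] := by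
  show bop S _ = _
  apply bop_ext
  · show evalFrom (bop S) v (f 0)
      (j + ∑ k ∈ Finset.univ.filter (· < (0 : Fin 2)), len (f k)) = _
    rw [off0]
    simp
  · show evalFrom (bop S) v (f 1)
      (j + ∑ k ∈ Finset.univ.filter (· < (1 : Fin 2)), len (f k)) = _
    rw [off1]
    simp

lemma sum_range_split (g : ℕ → ℕ) (a b : ℕ) :
    ∑ i ∈ Finset.range (a + b), g i =
      (∑ i ∈ Finset.range a, g i) + ∑ i ∈ Finset.range b, g (a + i) := by
  induction b with
  | zero => simp
  | succ b ih =>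
      rw [show a + (b + 1) = (a + b) + 1 from rfl, Finset.sum_range_succ, ih,
        Finset.sum_range_succ]
      omega

lemma pl_evalFrom (S : Set ℕ) (v : ℕ → A2) : ∀ (t : Brack 2) (j : ℕ),
    pl (evalFrom (bop S) v t j) = ∑ i ∈ Finset.range (len t), pl (v (j + i)) := by
  intro t
  induction t with
  | x => intro j; simp [evalFrom_x, len]
  | node f ih =>
      intro j
      rw [evalFrom_node, pl_bop]
      simp only [Matrix.cons_val_zero, Matrix.cons_val_one, Matrix.head_cons]
      rw [ih 0, ih 1, len_node, sum_range_split]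
      simp only [Nat.add_assoc]

lemma pd_evalFrom (S : Set ℕ) (v : ℕ → A2) : ∀ (t : Brack 2) (j : ℕ),
    pd (evalFrom (bop S) v t j) = dl t + pd (v j) := by
  intro t
  induction t with
  | x => intro j; simp [evalFrom_x, dl]
  | node f ih =>
      intro j
      rw [evalFrom_node, pd_bop]
      simp only [Matrix.cons_val_zero]
      rw [ih 0, dl_node]
      omega

lemma pe_evalFrom (S : Set ℕ) (v : ℕ → A2) : ∀ (t : Brack 2) (j : ℕ),
    pe (evalFrom (bop S) v t j) = dr t + pe (v (j + (len t - 1))) := by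
  intro t
  induction t with
  | x => intro j; simp [evalFrom_x, dr, len]
  | node f ih =>
      intro j
      rw [evalFrom_node, pe_bop]
      simp only [Matrix.cons_val_one, Matrix.head_cons, Matrix.cons_val_fin_one]
      rw [ih 1, dr_node]
      have h0 := len_pos (f 0)
      have h1 := len_pos (f 1)
      have : j + len (f 0) + (len (f 1) - 1) = j + (len (.node f) - 1) := by
        rw [len_node]; omega
      rw [this]
      omega

lemma evalFrom_inl {S : Set ℕ} {v : ℕ → A2} : ∀ (t : Brack 2) (j : ℕ) (u : Brack 2),
    evalFrom (bop S) v t j = .inl u → Inst t u := by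
  intro t
  induction t with
  | x => intro j u _; exact Inst.x _
  | node f ih =>
      intro j u h
      rw [evalFrom_node] at h
      by_cases hex : ∃ s t' : Brack 2,
          (![evalFrom (bop S) v (f 0) j, evalFrom (bop S) v (f 1) (j + len (f 0))]) 0 = .inl s ∧
          (![evalFrom (bop S) v (f 0) j, evalFrom (bop S) v (f 1) (j + len (f 0))]) 1 = .inl t' ∧
          Good S (.node ![s, t'])
      · obtain ⟨s, t', h0, h1, hg⟩ := hex
        rw [bop_inl h0 h1 hg] at h
        simp only [Matrix.cons_val_zero, Matrix.cons_val_one, Matrix.head_cons] at h0 h1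
        have hu : u = .node ![s, t'] := (Sum.inl.inj h).symm
        rw [hu]
        refine Inst.node ?_ ?_ <;>
          simp only [Matrix.cons_val_zero, Matrix.cons_val_one, Matrix.head_cons]
        · exact ih 0 _ _ h0
        · exact ih 1 _ _ h1
      · rw [bop_inr hex] at h
        cases h

lemma evalFrom_inr_of_bad {S : Set ℕ} (v : ℕ → A2) : ∀ (t : Brack 2) (j : ℕ),
    ¬ Good S t → ∃ z, evalFrom (bop S) v t j = .inr z := by
  intro t
  induction t with
  | x => intro j hb; exact (hb (good_x S)).elim
  | node f ih =>
      intro j hb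
      rw [evalFrom_node]
      by_cases hex : ∃ s t' : Brack 2,
          (![evalFrom (bop S) v (f 0) j, evalFrom (bop S) v (f 1) (j + len (f 0))]) 0 = .inl s ∧
          (![evalFrom (bop S) v (f 0) j, evalFrom (bop S) v (f 1) (j + len (f 0))]) 1 = .inl t' ∧
          Good S (.node ![s, t'])
      · exfalso
        obtain ⟨s, t', h0, h1, hg⟩ := hex
        simp only [Matrix.cons_val_zero, Matrix.cons_val_one, Matrix.head_cons] at h0 h1
        have i0 : Inst (f 0) s := evalFrom_inl _ _ _ h0
        have i1 : Inst (f 1) t' := evalFrom_inl _ _ _ h1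
        obtain ⟨a, ha, hocc⟩ := not_good_iff.mp hb
        have hi : Inst (.node f) (.node ![s, t']) := by
          refine Inst.node ?_ ?_ <;>
            simp only [Matrix.cons_val_zero, Matrix.cons_val_one, Matrix.head_cons]
          · exact i0
          · exact i1
        exact hg a ha (hocc.of_inst hi)
      · exact ⟨_, bop_inr hex⟩

lemma pl_phi (S : Set ℕ) (u : Brack 2) :
    pl (if Good S u then (.inl u : A2) else .inr (len u, dl u, dr u)) = len u := by
  split_ifs <;> rfl

lemma pd_phi (S : Set ℕ) (u : Brack 2) :
    pd (if Good S u then (.inl u : A2) else .inr (len u, dl u, dr u)) = dl u := by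
  split_ifs <;> rfl

lemma pe_phi (S : Set ℕ) (u : Brack 2) :
    pe (if Good S u then (.inl u : A2) else .inr (len u, dl u, dr u)) = dr u := by
  split_ifs <;> rfl

lemma evalFrom_const (S : Set ℕ) : ∀ (t : Brack 2) (j : ℕ),
    evalFrom (bop S) (fun _ => (.inl .x : A2)) t j =
      if Good S t then .inl t else .inr (len t, dl t, dr t) := by
  intro t
  induction t with
  | x => intro j; rw [if_pos (good_x S)]; rfl
  | node f ih =>
      intro j
      rw [evalFrom_node, ih 0, ih 1]
      by_cases hn : Good S (.node f)
      · rw [if_pos (hn.child 0), if_pos (hn.child 1), if_pos hn]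
        rw [bop_inl (s := f 0) (t := f 1) (by simp) (by simp) (by rw [eta2]; exact hn)]
        rw [eta2]
      · rw [if_neg hn]
        have hne : ¬ ∃ s t' : Brack 2,
            (![if Good S (f 0) then (.inl (f 0) : A2) else .inr (len (f 0), dl (f 0), dr (f 0)),
               if Good S (f 1) then (.inl (f 1) : A2) else
                 .inr (len (f 1), dl (f 1), dr (f 1))]) 0 = .inl s ∧
            (![if Good S (f 0) then (.inl (f 0) : A2) else .inr (len (f 0), dl (f 0), dr (f 0)),
               if Good S (f 1) then (.inl (f 1) : A2) else
                 .inr (len (f 1), dl (f 1), dr (f 1))]) 1 = .inl t' ∧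
            Good S (.node ![s, t']) := by
          rintro ⟨s, t', h0, h1, hg⟩
          simp only [Matrix.cons_val_zero, Matrix.cons_val_one, Matrix.head_cons] at h0 h1
          split_ifs at h0 h1 with hf0 hf1
          · rw [show s = f 0 from (Sum.inl.inj h0).symm,
              show t' = f 1 from (Sum.inl.inj h1).symm, eta2] at hg
            exact hn hg
        rw [bop_inr hne]
        simp only [Matrix.cons_val_zero, Matrix.cons_val_one, Matrix.head_cons]
        rw [pl_phi, pl_phi, pd_phi, pe_phi, len_node, dl_node, dr_node]

end Groupoid
section Counting

open Brack
open scoped Classical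

noncomputable def phi (S : Set ℕ) (n : ℕ) : {t : Brack 2 // occ t = n} → A2 :=
  fun t => if Good S t.1 then .inl t.1 else .inr (len t.1, dl t.1, dr t.1)

lemma eval_const (S : Set ℕ) (t : Brack 2) :
    eval (bop S) t (fun _ => (.inl .x : A2)) =
      if Good S t then .inl t else .inr (len t, dl t, dr t) :=
  evalFrom_const S t 0

lemma char (S : Set ℕ) (n : ℕ) (s t : {t : Brack 2 // occ t = n}) :
    (∀ v : ℕ → A2, eval (bop S) s.1 v = eval (bop S) t.1 v) ↔ phi S n s = phi S n t := by
  constructor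
  · intro h
    have := h (fun _ => (.inl .x : A2))
    rw [eval_const, eval_const] at this
    exact this
  · intro h v
    unfold phi at h
    by_cases hs : Good S s.1
    · by_cases ht : Good S t.1
      · rw [if_pos hs, if_pos ht] at h
        have : s.1 = t.1 := Sum.inl.inj h
        rw [eval, eval, this]
      · rw [if_pos hs, if_neg ht] at h; simp at h
    · by_cases ht : Good S t.1
      · rw [if_neg hs, if_pos ht] at h; simp at h
      · rw [if_neg hs, if_neg ht] at h
        obtain ⟨hl, hd, he⟩ : len s.1 = len t.1 ∧ dl s.1 = dl t.1 ∧ dr s.1 = dr t.1 := by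
          have := Sum.inr.inj h
          exact ⟨congrArg Prod.fst this, congrArg (Prod.fst ∘ Prod.snd) this,
            congrArg (Prod.snd ∘ Prod.snd) this⟩
        obtain ⟨zs, hzs⟩ := evalFrom_inr_of_bad v s.1 0 hs
        obtain ⟨zt, hzt⟩ := evalFrom_inr_of_bad v t.1 0 ht
        rw [eval, eval, hzs, hzt]
        have e1 : zs.1 = zt.1 := by
          have a1 := pl_evalFrom S v s.1 0
          have a2 := pl_evalFrom S v t.1 0
          rw [hzs] at a1; rw [hzt] at a2
          simp only [pl_inr] at a1 a2
          rw [a1, a2, hl]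
        have e2 : zs.2.1 = zt.2.1 := by
          have a1 := pd_evalFrom S v s.1 0
          have a2 := pd_evalFrom S v t.1 0
          rw [hzs] at a1; rw [hzt] at a2
          simp only [pd_inr] at a1 a2
          rw [a1, a2, hd]
        have e3 : zs.2.2 = zt.2.2 := by
          have a1 := pe_evalFrom S v s.1 0
          have a2 := pe_evalFrom S v t.1 0
          rw [hzs] at a1; rw [hzt] at a2
          simp only [pe_inr] at a1 a2
          rw [a1, a2, he, hl]
        have : zs = zt := Prod.ext e1 (Prod.ext e2 e3)
        rw [this]

lemma setoid_eq (S : Set ℕ) (n : ℕ) :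
    tfSetoid (bop S) n = Setoid.ker (phi S n) := by
  apply Setoid.ext
  intro s t
  exact char S n s t

/-- the level sets -/
def GSet (S : Set ℕ) (n : ℕ) : Set (Brack 2) := {t | occ t = n ∧ Good S t}
def BSet (S : Set ℕ) (n : ℕ) : Set (Brack 2) := {t | occ t = n ∧ ¬ Good S t}
def TSet (S : Set ℕ) (n : ℕ) : Set (ℕ × ℕ × ℕ) :=
  (fun t => (len t, dl t, dr t)) '' BSet S n

lemma range_phi (S : Set ℕ) (n : ℕ) :
    Set.range (phi S n) = Sum.inl '' GSet S n ∪ Sum.inr '' TSet S n := by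
  ext z
  constructor
  · rintro ⟨⟨t, ht⟩, rfl⟩
    unfold phi
    split_ifs with hg
    · exact Or.inl ⟨t, ⟨ht, hg⟩, rfl⟩
    · exact Or.inr ⟨(len t, dl t, dr t), ⟨t, ⟨ht, hg⟩, rfl⟩, rfl⟩
  · rintro (⟨t, ⟨ht, hg⟩, rfl⟩ | ⟨w, ⟨t, ⟨ht, hg⟩, rfl⟩, rfl⟩)
    · exact ⟨⟨t, ht⟩, by unfold phi; rw [if_pos hg]⟩
    · exact ⟨⟨t, ht⟩, by unfold phi; rw [if_neg hg]⟩

/-- finiteness of levels -/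
lemma word_len (t : Brack 2) : (word t).length = 2 * occ t + 1 := by
  induction t with
  | x => rfl
  | node f ih =>
      show (true :: (List.ofFn fun i => word (f i)).flatten).length = _
      rw [List.length_cons, List.length_flatten]
      have : (List.ofFn fun i => word (f i)) = [word (f 0), word (f 1)] := by
        simp [List.ofFn_succ]
      rw [this]
      simp only [List.map_cons, List.map_nil, List.sum_cons, List.sum_nil]
      rw [ih 0, ih 1, occ_node]
      ring

lemma word_node (f : Fin 2 → Brack 2) :
    word (.node f) = true :: (word (f 0) ++ word (f 1)) := by
  show true :: (List.ofFn fun i => word (f i)).flatten = _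
  have : (List.ofFn fun i => word (f i)) = [word (f 0), word (f 1)] := by
    simp [List.ofFn_succ]
  rw [this]
  simp

lemma word_prefix : ∀ (s t : Brack 2) (r r' : List Bool),
    word s ++ r = word t ++ r' → s = t ∧ r = r' := by
  intro s
  induction s with
  | x =>
      intro t r r' h
      cases t with
      | x =>
          constructor
          · rfl
          · simpa [word] using h
      | node g => simp [word, word_node] at h
  | node f ih =>
      intro t r r' h
      cases t with
      | x => simp [word, word_node] at h
      | node g =>
          rw [word_node, word_node] at h
          simp only [List.cons_append, List.cons.injEq, List.append_assoc] at h
          obtain ⟨-, h⟩ := h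
          obtain ⟨e0, h⟩ := ih 0 (g 0) _ _ h
          obtain ⟨e1, h⟩ := ih 1 (g 1) _ _ h
          refine ⟨?_, h⟩
          rw [fun2_ext e0 e1]

lemma word_inj {s t : Brack 2} (h : word s = word t) : s = t :=
  (word_prefix s t [] [] (by simpa using h)).1

instance finLevel (n : ℕ) : Finite {t : Brack 2 // occ t = n} := by
  apply Finite.of_injective
    (fun t : {t : Brack 2 // occ t = n} =>
      (fun i : Fin (2 * n + 1) => (word t.1).getD i false))
  intro a b hab
  apply Subtype.ext
  apply word_inj
  have la : (word a.1).length = 2 * n + 1 := by rw [word_len, a.2]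
  have lb : (word b.1).length = 2 * n + 1 := by rw [word_len, b.2]
  apply List.ext_getElem (la.trans lb.symm)
  intro i h1 h2
  have hi : i < 2 * n + 1 := by omega
  have := congrFun hab ⟨i, hi⟩
  simpa [List.getD_eq_getElem, h1, h2] using this

lemma finLvlSet (n : ℕ) : ({t : Brack 2 | occ t = n} : Set (Brack 2)).Finite := by
  haveI : Finite ↥{t : Brack 2 | occ t = n} := finLevel n
  exact Set.toFinite _

lemma finGSet (S : Set ℕ) (n : ℕ) : (GSet S n).Finite :=
  Set.Finite.subset (finLvlSet n) (fun t ht => ht.1)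

lemma finBSet (S : Set ℕ) (n : ℕ) : (BSet S n).Finite :=
  Set.Finite.subset (finLvlSet n) (fun t ht => ht.1)

lemma finTSet (S : Set ℕ) (n : ℕ) : (TSet S n).Finite := (finBSet S n).image _

/-- the spectrum entry -/
noncomputable def spec (S : Set ℕ) (n : ℕ) : ℕ :=
  Nat.card (Quotient (tfSetoid (bop S) n))

lemma spec_formula (S : Set ℕ) (n : ℕ) :
    spec S n = (GSet S n).ncard + (TSet S n).ncard := by
  unfold spec
  rw [setoid_eq]
  rw [Nat.card_congr (Setoid.quotientKerEquivRange (phi S n))]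
  rw [Nat.card_coe_set_eq, range_phi]
  rw [Set.ncard_union_eq ?disj ((finGSet S n).image _) ((finTSet S n).image _)]
  · rw [Set.ncard_image_of_injective _ Sum.inl_injective,
      Set.ncard_image_of_injective _ Sum.inr_injective]
  case disj =>
    rw [Set.disjoint_left]
    rintro z ⟨t, -, rfl⟩ ⟨w, -, hw⟩
    cases hw

lemma spec_pos (S : Set ℕ) (n : ℕ) : 1 ≤ spec S n := by
  unfold spec
  have : Nonempty {t : Brack 2 // occ t = n} := ⟨⟨Rc n, occ_Rc n⟩⟩
  have : Nonempty (Quotient (tfSetoid (bop S) n)) := Nonempty.map (Quotient.mk _) this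
  exact Nat.one_le_iff_ne_zero.mpr Nat.card_pos.ne'

end Counting
section Main

open Brack
open scoped Classical

lemma um_bad (S : Set ℕ) (m : ℕ) : ¬ Good S (um m) :=
  not_good_iff.mpr ⟨0, Or.inl rfl, pocc_pat0_um m⟩

lemma claimA {S : Set ℕ} {S' : Set ℕ} {m : ℕ} (hm : m ∈ S)
    (hlt : ∀ k < m, (k ∈ S ↔ k ∈ S')) : Pat (m + 1) ∈ GSet S (m + 5) := by
  refine ⟨by simp, fun a ha hocc => ?_⟩
  have hle : a ≤ m + 1 := by
    have := hocc.occ_le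
    simp only [occ_Pat] at this
    omega
  rcases Nat.lt_or_ge a (m + 1) with hab | hab
  · exact pat_antichain hab hocc
  · have : a = m + 1 := by omega
    subst this
    rcases ha with h0 | ⟨k, hk, hkS⟩
    · omega
    · have : k = m := by omega
      subst this
      exact hkS hm

lemma claimB {S S' : Set ℕ} {m : ℕ} (hm : m ∈ S) (hm' : m ∉ S')
    (hlt : ∀ k < m, (k ∈ S ↔ k ∈ S')) :
    GSet S' (m + 5) = GSet S (m + 5) \ {Pat (m + 1)} := by
  ext t
  constructor
  · rintro ⟨hocc, hg'⟩
    refine ⟨⟨hocc, fun a ha hp => ?_⟩, fun hteq => ?_⟩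
    · have hle : a ≤ m + 1 := by
        have := hp.occ_le
        simp only [occ_Pat, hocc] at this
        omega
      refine hg' a ?_ hp
      rcases ha with h0 | ⟨k, rfl, hkS⟩
      · exact Or.inl h0
      · rcases Nat.lt_or_ge k m with hkm | hkm
        · exact Or.inr ⟨k, rfl, fun hx => hkS ((hlt k hkm).mpr hx)⟩
        · have : k = m := by omega
          subst this
          exact absurd hm hkS
    · simp only [Set.mem_singleton_iff] at hteq
      subst hteq
      exact hg' (m + 1) (Or.inr ⟨m, rfl, hm'⟩) (pocc_pat_refl _)
  · rintro ⟨⟨hocc, hg⟩, hne⟩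
    simp only [Set.mem_singleton_iff] at hne
    refine ⟨hocc, fun a ha' hp => ?_⟩
    have hle : a ≤ m + 1 := by
      have := hp.occ_le
      simp only [occ_Pat, hocc] at this
      omega
    rcases Nat.lt_or_ge a (m + 1) with hab | hab
    · refine hg a ?_ hp
      rcases ha' with h0 | ⟨k, rfl, hkS⟩
      · exact Or.inl h0
      · have hkm : k < m := by omega
        exact Or.inr ⟨k, rfl, fun hx => hkS ((hlt k hkm).mp hx)⟩
    · have : a = m + 1 := by omega
      subst this
      apply hne
      have : occ (Pat (m + 1)) = occ t := by simp [hocc]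
      exact (hp.eq_of_occ this).symm

lemma claimC {S S' : Set ℕ} {m : ℕ} (hm : m ∈ S) (hm' : m ∉ S')
    (hlt : ∀ k < m, (k ∈ S ↔ k ∈ S')) :
    TSet S' (m + 5) = TSet S (m + 5) := by
  have hB : BSet S' (m + 5) = BSet S (m + 5) ∪ {Pat (m + 1)} := by
    have hGB := claimB hm hm' hlt
    ext t
    constructor
    · rintro ⟨hocc, hb'⟩
      by_cases hg : Good S t
      · right
        by_contra hne
        simp only [Set.mem_singleton_iff] at hne
        have : t ∈ GSet S' (m + 5) := by
          rw [hGB]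
          exact ⟨⟨hocc, hg⟩, hne⟩
        exact hb' this.2
      · exact Or.inl ⟨hocc, hg⟩
    · rintro (⟨hocc, hb⟩ | hteq)
      · refine ⟨hocc, fun hg' => hb ?_⟩
        have : t ∈ GSet S' (m + 5) := ⟨hocc, hg'⟩
        rw [hGB] at this
        exact this.1.2
      · simp only [Set.mem_singleton_iff] at hteq
        subst hteq
        refine ⟨by simp, fun hg' => ?_⟩
        exact hg' (m + 1) (Or.inr ⟨m, rfl, hm'⟩) (pocc_pat_refl _)
  unfold TSet
  rw [hB, Set.image_union, Set.image_singleton]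
  apply Set.union_eq_left.mpr
  rw [Set.singleton_subset_iff]
  refine ⟨um m, ⟨by simp, um_bad S m⟩, ?_⟩
  simp [len_eq_occ]

lemma spec_succ {S S' : Set ℕ} {m : ℕ} (hm : m ∈ S) (hm' : m ∉ S')
    (hlt : ∀ k < m, (k ∈ S ↔ k ∈ S')) :
    spec S (m + 5) = spec S' (m + 5) + 1 := by
  rw [spec_formula, spec_formula, claimB hm hm' hlt, claimC hm hm' hlt]
  have := Set.ncard_diff_singleton_add_one (claimA hm hlt) (finGSet S (m + 5))
  omega

end Main
/-- there are continuum many associative spectra of binary groupoids -/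
theorem stmt_18 :
    Cardinal.mk {a : ℕ → ℕ | (∀ n, 1 ≤ a n) ∧ ∃ (A : Type) (op : (Fin 2 → A) → A),
        ∀ n, a n = Nat.card (Quotient (tfSetoid op n))} = Cardinal.continuum := by
  classical
  have hspec : ∀ S : Set ℕ, (fun n => spec S n) ∈
      {a : ℕ → ℕ | (∀ n, 1 ≤ a n) ∧ ∃ (A : Type) (op : (Fin 2 → A) → A),
        ∀ n, a n = Nat.card (Quotient (tfSetoid op n))} :=
    fun S => ⟨fun n => spec_pos S n, ⟨A2, bop S, fun _ => rfl⟩⟩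
  have hinj : Function.Injective (fun S : Set ℕ =>
      (⟨fun n => spec S n, hspec S⟩ :
        {a : ℕ → ℕ | (∀ n, 1 ≤ a n) ∧ ∃ (A : Type) (op : (Fin 2 → A) → A),
          ∀ n, a n = Nat.card (Quotient (tfSetoid op n))})) := by
    intro S S' h
    have h' : ∀ n, spec S n = spec S' n :=
      fun n => congrFun (congrArg Subtype.val h) n
    by_contra hne
    have hne2 : ∃ k, ¬ (k ∈ S ↔ k ∈ S') := by
      by_contra hall
      push_neg at hall
      exact hne (Set.ext fun k => hall k)
    set m := Nat.find hne2 with hmdef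
    have hm := Nat.find_spec hne2
    have hlt : ∀ k < m, (k ∈ S ↔ k ∈ S') := fun k hk => not_not.mp (Nat.find_min hne2 hk)
    by_cases hmS : m ∈ S
    · have hmS' : m ∉ S' := fun hx => hm ⟨fun _ => hx, fun _ => hmS⟩
      have h1 := spec_succ hmS hmS' hlt
      have h2 := h' (m + 5)
      omega
    · have hmS' : m ∈ S' := by
        by_contra hx
        exact hm ⟨fun hy => absurd hy hmS, fun hy => absurd hy hx⟩
      have h1 := spec_succ hmS' hmS (fun k hk => (hlt k hk).symm)
      have h2 := h' (m + 5)
      omega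
  apply le_antisymm
  · calc Cardinal.mk {a : ℕ → ℕ | (∀ n, 1 ≤ a n) ∧ ∃ (A : Type) (op : (Fin 2 → A) → A),
        ∀ n, a n = Nat.card (Quotient (tfSetoid op n))}
        ≤ Cardinal.mk (ℕ → ℕ) := Cardinal.mk_set_le _
    _ = Cardinal.continuum := by
        rw [← Cardinal.power_def ℕ ℕ, Cardinal.mk_nat, Cardinal.power_self_eq le_rfl,
          Cardinal.two_power_aleph0]
  · have hle := Cardinal.mk_le_of_injective hinj
    rw [Cardinal.mk_set, Cardinal.mk_nat, Cardinal.two_power_aleph0] at hle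
    exact hle
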